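/- Let G be a finite group acting by ring automorphisms on a commutative ring A, and let A^G denote the subring of G-invariant elements. If f₁ and f₂ are ring homomorphisms from A to a field L whose restrictions to A^G coincide, then there exists g ∈ G such that f₂ = f₁ ∘ g (where g is viewed as the ring automorphism of A given by the action). -/

import Mathlib

open Polynomial Pointwise

section Aux

variable {A : Type*} [CommRing A] {G : Type*} [Group G]
    [MulSemiringAction G A] {L : Type*} [Field L]

theorem prod_eq_aux [Fintype G] (f₁ f₂ : A →+* L)
    (h : ∀ a : A, (∀ g : G, g • a = a) → f₁ a = f₂ a) (b : A) (t : L) :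
    (∏ g : G, (t - f₂ (g • b))) = ∏ g : G, (t - f₁ (g • b)) := by
  classical
  set p : A[X] := ∏ g : G, (X - C (g • b)) with hp
  have hsmul : ∀ σ : G, σ • p = p := by
    intro σ
    rw [hp, Finset.smul_prod']
    refine Fintype.prod_equiv (Equiv.mulLeft σ) _ _ fun g => ?_
    rw [smul_sub, Polynomial.smul_X, Polynomial.smul_C, smul_smul]
    rfl
  have hmap : p.map f₁ = p.map f₂ := by
    ext n
    rw [coeff_map, coeff_map]
    exact h _ fun σ => by rw [← Polynomial.coeff_smul, hsmul]
  have e : ∀ f : A →+* L, (p.map f).eval t = ∏ g : G, (t - f (g • b)) := by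
    intro f
    rw [hp, Polynomial.map_prod, eval_prod]
    refine Finset.prod_congr rfl fun g _ => ?_
    simp
  rw [← e f₂, ← e f₁, hmap]

theorem pointwise_aux [Fintype G] (f₁ f₂ : A →+* L)
    (h : ∀ a : A, (∀ g : G, g • a = a) → f₁ a = f₂ a) (b : A) :
    ∃ g : G, f₂ b = f₁ (g • b) := by
  have W := prod_eq_aux f₁ f₂ h b (f₂ b)
  have h0 : (∏ g : G, (f₂ b - f₂ (g • b))) = 0 :=
    Finset.prod_eq_zero (Finset.mem_univ 1) (by simp)
  rw [h0] at W
  obtain ⟨g, -, hg⟩ := Finset.prod_eq_zero_iff.mp W.symm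
  exact ⟨g, sub_eq_zero.mp hg⟩

theorem mem_of_smul_mem [Finite G] (σ : G) (I : Ideal A)
    (hcl : ∀ x ∈ I, σ • x ∈ I) : ∀ x : A, σ • x ∈ I → x ∈ I := by
  have hpow : ∀ k : ℕ, ∀ x ∈ I, σ ^ k • x ∈ I := by
    intro k
    induction k with
    | zero => intro x hx; simpa using hx
    | succ k ih =>
      intro x hx
      rw [pow_succ, mul_smul]
      exact ih _ (hcl x hx)
  intro x hx
  have := hpow (orderOf σ - 1) _ hx
  rwa [smul_smul, ← pow_succ, Nat.sub_add_cancel (orderOf_pos σ), pow_orderOf_eq_one,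
    one_smul] at this


set_option maxHeartbeats 1000000 in
/-- The case of two injective ring homomorphisms from a domain into a field,
agreeing on the fixed subring of a finite group action. -/
theorem domain_case {D : Type*} [CommRing D] [IsDomain D] {H : Type*} [Group H] [Finite H]
    [MulSemiringAction H D] {L : Type*} [Field L] (fb₁ fb₂ : D →+* L)
    (inj₁ : Function.Injective fb₁) (inj₂ : Function.Injective fb₂)
    (hagree : ∀ v : D, (∀ hh : H, hh • v = v) → fb₁ v = fb₂ v) :
    ∃ hh : H, ∀ d : D, fb₂ d = fb₁ (hh • d) := by
  classical
  letI : Fintype H := Fintype.ofFinite _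
  have tre : ∀ (hh : H) (d : D), MulSemiringAction.toRingEquiv H D hh d = hh • d :=
    fun _ _ => rfl
  have ext_aux : ∀ e₁ e₂ : FractionRing D ≃+* FractionRing D,
      (∀ d : D, e₁ (algebraMap D (FractionRing D) d)
        = e₂ (algebraMap D (FractionRing D) d)) → e₁ = e₂ := by
    intro e₁ e₂ he
    have hr : (e₁ : FractionRing D →+* FractionRing D) = e₂ :=
      IsLocalization.ringHom_ext (nonZeroDivisors D) (RingHom.ext he)
    exact RingEquiv.ext fun x => RingHom.congr_fun hr x
  let Ψ : H →* (FractionRing D ≃+* FractionRing D) :=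
  { toFun := fun hh =>
      IsFractionRing.ringEquivOfRingEquiv (MulSemiringAction.toRingEquiv H D hh)
    map_one' := ext_aux _ _ fun d => by
      rw [IsFractionRing.ringEquivOfRingEquiv_algebraMap, tre, one_smul]
      rfl
    map_mul' := fun g₁ g₂ => ext_aux _ _ fun d => by
      rw [IsFractionRing.ringEquivOfRingEquiv_algebraMap, tre]
      rw [RingAut.mul_apply]
      rw [IsFractionRing.ringEquivOfRingEquiv_algebraMap, tre,
        IsFractionRing.ringEquivOfRingEquiv_algebraMap, tre, mul_smul] }
  letI : MulSemiringAction H (FractionRing D) := MulSemiringAction.compHom _ Ψ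
  have smulK : ∀ (hh : H) (d : D),
      hh • (algebraMap D (FractionRing D) d)
        = algebraMap D (FractionRing D) (hh • d) := by
    intro hh d
    show IsFractionRing.ringEquivOfRingEquiv (MulSemiringAction.toRingEquiv H D hh)
      (algebraMap _ _ d) = _
    rw [IsFractionRing.ringEquivOfRingEquiv_algebraMap, tre]
  let F₁ : FractionRing D →+* L := IsFractionRing.lift inj₁
  let F₂ : FractionRing D →+* L := IsFractionRing.lift inj₂
  have F₁_alg : ∀ d : D, F₁ (algebraMap _ _ d) = fb₁ d := fun d =>
    IsFractionRing.lift_algebraMap inj₁ d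
  have F₂_alg : ∀ d : D, F₂ (algebraMap _ _ d) = fb₂ d := fun d =>
    IsFractionRing.lift_algebraMap inj₂ d
  -- agreement of F₁ and F₂ on the fixed field
  have hE : ∀ x : FractionRing D, (∀ hh : H, hh • x = x) → F₁ x = F₂ x := by
    intro x hx
    obtain ⟨⟨d, s⟩, rfl⟩ := IsLocalization.mk'_surjective (nonZeroDivisors D) x
    have hs0 : (s : D) ≠ 0 := nonZeroDivisors.ne_zero s.2
    set N : D := ∏ hh : H, hh • (s : D) with hNdef
    have hNinv : ∀ hh₀ : H, hh₀ • N = N := by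
      intro hh₀
      rw [hNdef, Finset.smul_prod']
      refine Fintype.prod_equiv (Equiv.mulLeft hh₀) _ _ fun k => ?_
      rw [smul_smul]
      rfl
    have hN0 : N ≠ 0 := by
      rw [hNdef]
      refine Finset.prod_ne_zero_iff.mpr fun hh _ => fun e => hs0 ?_
      have : hh⁻¹ • (hh • (s : D)) = hh⁻¹ • (0 : D) := by rw [e]
      rwa [inv_smul_smul, smul_zero] at this
    set M : D := ∏ hh ∈ Finset.univ.erase (1 : H), hh • (s : D) with hMdef
    have hNs : N = (s : D) * M := by
      rw [hNdef, hMdef, ← Finset.mul_prod_erase Finset.univ _ (Finset.mem_univ (1 : H)),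
        one_smul]
    have key : IsLocalization.mk' (FractionRing D) d s
        * algebraMap D (FractionRing D) N
        = algebraMap D (FractionRing D) (d * M) := by
      rw [hNs, map_mul, ← mul_assoc, IsLocalization.mk'_spec, ← map_mul]
    have hw : ∀ hh : H, hh • (d * M) = d * M := by
      intro hh
      refine IsFractionRing.injective D (FractionRing D) ?_
      rw [← smulK, ← key, smul_mul', hx hh, smulK, hNinv]
    have e₁ : F₁ (IsLocalization.mk' (FractionRing D) d s) * fb₁ N = fb₁ (d * M) := by
      rw [← F₁_alg, ← map_mul, key, F₁_alg]
    have e₂ : F₂ (IsLocalization.mk' (FractionRing D) d s) * fb₂ N = fb₂ (d * M) := by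
      rw [← F₂_alg, ← map_mul, key, F₂_alg]
    have hb1N : fb₁ N ≠ 0 := fun e => hN0 (inj₁ (by rw [e, map_zero]))
    have hNagree : fb₁ N = fb₂ N := hagree N hNinv
    have hwagree : fb₁ (d * M) = fb₂ (d * M) := hagree _ hw
    have hfin : F₁ (IsLocalization.mk' (FractionRing D) d s) * fb₁ N
        = F₂ (IsLocalization.mk' (FractionRing D) d s) * fb₁ N := by
      rw [e₁, hwagree, ← e₂, hNagree]
    exact mul_right_cancel₀ hb1N hfin
  -- Galois theory: produce the automorphism and descend it to H
  have memE : ∀ x : FractionRing D,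
      x ∈ FixedPoints.subfield H (FractionRing D) ↔ ∀ hh : H, hh • x = x :=
    fun x => Iff.rfl
  letI : Algebra (FractionRing D) L := F₁.toAlgebra
  letI : Algebra ↥(FixedPoints.subfield H (FractionRing D)) L :=
    (F₁.comp (Subfield.subtype _)).toAlgebra
  haveI : @IsScalarTower ↥(FixedPoints.subfield H (FractionRing D))
      (FractionRing D) L Algebra.toSMul Algebra.toSMul Algebra.toSMul := IsScalarTower.of_algebraMap_eq fun x => rfl
  let ϕ : (FractionRing D)
      →ₐ[↥(FixedPoints.subfield H (FractionRing D))] L :=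
  { toRingHom := F₂
    commutes' := fun r => (hE r.1 ((memE r.1).mp r.2)).symm }
  let σ := AlgHom.restrictNormal' ϕ (FractionRing D)
  have hσ : ∀ x : FractionRing D, F₁ (σ x) = F₂ x := by
    intro x
    have hcomm := AlgHom.restrictNormal_commutes ϕ (FractionRing D) x
    exact hcomm
  obtain ⟨hh, hhh⟩ := FixedPoints.toAlgAut_surjective H (FractionRing D) σ
  refine ⟨hh, fun d => ?_⟩
  have happ : σ (algebraMap D (FractionRing D) d)
      = hh • (algebraMap D (FractionRing D) d) := by
    rw [← hhh]
    rfl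
  calc fb₂ d = F₂ (algebraMap _ _ d) := (F₂_alg _).symm
    _ = F₁ (σ (algebraMap _ _ d)) := (hσ _).symm
    _ = F₁ (hh • algebraMap _ _ d) := by rw [happ]
    _ = F₁ (algebraMap _ _ (hh • d)) := by rw [smulK]
    _ = fb₁ (hh • d) := F₁_alg _

/-- Main lemma, under the additional assumption that the two kernels agree. -/
theorem main_aux [Fintype G] (f₁ f₂ : A →+* L)
    (h : ∀ a : A, (∀ g : G, g • a = a) → f₁ a = f₂ a)
    (P : Ideal A) (hk1 : RingHom.ker f₁ = P) (hk2 : RingHom.ker f₂ = P) :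
    ∃ g : G, ∀ a : A, f₂ a = f₁ (g • a) := by
  classical
  haveI hPprime : P.IsPrime := hk1 ▸ RingHom.ker_isPrime f₁
  set H : Subgroup G := MulAction.stabilizer G P with hHdef
  letI : Fintype H := Fintype.ofFinite _
  have hmemP1 : ∀ x : A, x ∈ P ↔ f₁ x = 0 := fun x => by
    rw [← hk1]; exact RingHom.mem_ker
  have hmemP2 : ∀ x : A, x ∈ P ↔ f₂ x = 0 := fun x => by
    rw [← hk2]; exact RingHom.mem_ker
  -- membership transfer for stabilizer elements
  have hmem_smul : ∀ g : G, g ∈ H → ∀ x : A, (g • x ∈ P ↔ x ∈ P) := by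
    intro g hg x
    have hgP : g • P = P := hg
    conv_lhs => rw [← hgP]
    exact Ideal.smul_mem_pointwise_smul_iff
  have hstab : ∀ g : G, (∀ x ∈ P, g • x ∈ P) → g ∈ H := by
    intro g hg
    have hle : g • P ≤ P := by
      intro x hx
      rw [Ideal.mem_pointwise_smul_iff_inv_smul_mem] at hx
      have := hg _ hx
      rwa [smul_inv_smul] at this
    refine le_antisymm hle ?_
    intro x hx
    rw [Ideal.mem_pointwise_smul_iff_inv_smul_mem]
    exact mem_of_smul_mem g P hg _ (by rwa [smul_inv_smul])
  -- find z, invariant under H, outside P, moved into P by elements outside H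
  set S : Finset G := Finset.univ.filter (fun g : G => g • P ≠ P) with hSdef
  have hJ : ¬ (S.inf (fun g => g • P) ≤ P) := by
    intro hle
    obtain ⟨g, hgS, hgle⟩ := (Ideal.IsPrime.inf_le' hPprime).mp hle
    have hgH : g ∈ H := hstab g fun x hx => hgle (Ideal.smul_mem_pointwise_smul g x P hx)
    exact (Finset.mem_filter.mp hgS).2 hgH
  obtain ⟨y, hyJ, hyP⟩ := SetLike.not_le_iff_exists.mp hJ
  have hy : ∀ g : G, g • P ≠ P → y ∈ g • P := by
    intro g hg
    have hmem : g ∈ S := Finset.mem_filter.mpr ⟨Finset.mem_univ g, hg⟩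
    exact SetLike.le_def.mp (Finset.inf_le hmem) hyJ
  set z : A := ∏ hh : H, (hh : G) • y with hzdef
  have hzP : z ∉ P := by
    rw [hzdef]
    intro hmem
    obtain ⟨hh, -, hhP⟩ := (Ideal.IsPrime.prod_mem_iff).mp hmem
    exact hyP ((hmem_smul _ hh.2 y).mp hhP)
  have hzH : ∀ hh : H, (hh : G) • z = z := by
    intro hh
    rw [hzdef, Finset.smul_prod']
    refine Fintype.prod_equiv (Equiv.mulLeft hh) _ _ fun k => ?_
    rw [smul_smul]
    rfl
  have hzO : ∀ g : G, g ∉ H → g • z ∈ P := by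
    intro g hg
    rw [hzdef, Finset.smul_prod']
    rw [← Finset.mul_prod_erase Finset.univ _ (Finset.mem_univ (1 : H))]
    refine Ideal.mul_mem_right _ _ ?_
    show g • (((1 : H) : G) • y) ∈ P
    rw [OneMemClass.coe_one, one_smul]
    have hne : g⁻¹ • P ≠ P := by
      intro hEq
      apply hg
      show g • P = P
      conv_lhs => rw [← hEq]
      rw [smul_inv_smul]
    have := hy g⁻¹ hne
    rwa [Ideal.mem_pointwise_smul_iff_inv_smul_mem, inv_inv] at this
  have W := prod_eq_aux f₁ f₂ h
  have PW : ∀ b : A, ∃ g : G, f₂ b = f₁ (g • b) := pointwise_aux f₁ f₂ h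
  have hf1z : f₁ z ≠ 0 := fun e => hzP ((hmemP1 z).mpr e)
  have hf2z : f₂ z ≠ 0 := fun e => hzP ((hmemP2 z).mpr e)
  have hfz : f₂ z = f₁ z := by
    obtain ⟨g, hg⟩ := PW z
    by_cases hgH : g ∈ H
    · rw [hg, hzH ⟨g, hgH⟩]
    · exfalso
      apply hf2z
      rw [hg]
      exact (hmemP1 _).mp (hzO g hgH)
  -- key agreement lemma on elements fixed by H modulo P
  have LemA : ∀ a : A, (∀ hh : H, (hh : G) • a - a ∈ P) → f₁ a = f₂ a := by
    intro a ha
    by_cases haP : a ∈ P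
    · rw [(hmemP1 a).mp haP, (hmemP2 a).mp haP]
    · have hrel := W (a * z) (f₁ a * f₁ z)
      have hR : (∏ g : G, (f₁ a * f₁ z - f₁ (g • (a * z)))) = 0 :=
        Finset.prod_eq_zero (Finset.mem_univ 1) (by simp)
      rw [hR] at hrel
      obtain ⟨g, -, hg0⟩ := Finset.prod_eq_zero_iff.mp hrel
      have hg0 : f₁ a * f₁ z = f₂ (g • (a * z)) := sub_eq_zero.mp hg0
      by_cases hgH : g ∈ H
      · have e1 : g • (a * z) = (g • a) * z := by rw [smul_mul', hzH ⟨g, hgH⟩]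
        have e2 : f₂ (g • a) = f₂ a := by
          have hm := (hmemP2 _).mp (ha ⟨g, hgH⟩)
          rw [map_sub] at hm
          exact sub_eq_zero.mp hm
        rw [e1, map_mul, e2, hfz] at hg0
        exact mul_right_cancel₀ hf1z hg0
      · have hone : g • (a * z) ∈ P := by
          rw [smul_mul']
          exact Ideal.mul_mem_left _ _ (hzO g hgH)
        rw [(hmemP2 _).mp hone] at hg0
        rcases mul_eq_zero.mp hg0 with h1 | h2
        · exact absurd ((hmemP1 a).mpr h1) haP
        · exact absurd h2 hf1z

  -- Part 2: the quotient domain A/P with its H-action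
  have hcomap : ∀ hh : H, P ≤ P.comap (MulSemiringAction.toRingHom G A (hh : G)) := by
    intro hh x hx
    have hx2 : ((hh : G)) • x ∈ P := (hmem_smul _ hh.2 x).mpr hx
    simpa [Ideal.mem_comap] using hx2
  letI actH : SMul H (A ⧸ P) :=
    ⟨fun hh => Ideal.quotientMap P (MulSemiringAction.toRingHom G A (hh : G)) (hcomap hh)⟩
  have smul_mk : ∀ (hh : H) (a : A),
      hh • (Ideal.Quotient.mk P a) = Ideal.Quotient.mk P ((hh : G) • a) := fun hh a =>
    Ideal.quotientMap_mk
  letI : MulSemiringAction H (A ⧸ P) :=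
  { smul := fun hh x => hh • x
    one_smul := fun x => by
      obtain ⟨a, rfl⟩ := Ideal.Quotient.mk_surjective x
      rw [smul_mk]
      simp
    mul_smul := fun g₁ g₂ x => by
      obtain ⟨a, rfl⟩ := Ideal.Quotient.mk_surjective x
      rw [smul_mk, smul_mk, smul_mk]
      simp [mul_smul]
    smul_zero := fun hh => map_zero _
    smul_add := fun hh x y => map_add _ x y
    smul_one := fun hh => map_one _
    smul_mul := fun hh x y => map_mul _ x y }
  -- the two induced embeddings of A/P into L
  have hker1' : ∀ a ∈ P, f₁ a = 0 := fun a ha => (hmemP1 a).mp ha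
  have hker2' : ∀ a ∈ P, f₂ a = 0 := fun a ha => (hmemP2 a).mp ha
  let fb₁ : A ⧸ P →+* L := Ideal.Quotient.lift P f₁ hker1'
  let fb₂ : A ⧸ P →+* L := Ideal.Quotient.lift P f₂ hker2'
  have fb₁_mk : ∀ a : A, fb₁ (Ideal.Quotient.mk P a) = f₁ a := fun a =>
    Ideal.Quotient.lift_mk P _ _
  have fb₂_mk : ∀ a : A, fb₂ (Ideal.Quotient.mk P a) = f₂ a := fun a =>
    Ideal.Quotient.lift_mk P _ _
  have inj₁ : Function.Injective fb₁ :=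
    RingHom.lift_injective_of_ker_le_ideal P hker1' (le_of_eq hk1)
  have inj₂ : Function.Injective fb₂ :=
    RingHom.lift_injective_of_ker_le_ideal P hker2' (le_of_eq hk2)
  have FinvD : ∀ v : A ⧸ P, (∀ hh : H, hh • v = v) → fb₁ v = fb₂ v := by
    intro v hv
    obtain ⟨a, rfl⟩ := Ideal.Quotient.mk_surjective v
    rw [fb₁_mk, fb₂_mk]
    refine LemA a fun hh => ?_
    refine (Ideal.Quotient.eq).mp ?_
    rw [← smul_mk hh a]
    exact hv hh
  obtain ⟨hh, hhD⟩ := domain_case fb₁ fb₂ inj₁ inj₂ FinvD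
  refine ⟨(hh : G), fun a => ?_⟩
  calc f₂ a = fb₂ (Ideal.Quotient.mk P a) := (fb₂_mk a).symm
    _ = fb₁ (hh • (Ideal.Quotient.mk P a)) := hhD _
    _ = fb₁ (Ideal.Quotient.mk P ((hh : G) • a)) := by rw [smul_mk]
    _ = f₁ ((hh : G) • a) := fb₁_mk _

end Aux

theorem stmt0 (A : Type*) [CommRing A] (G : Type*) [Group G] [Finite G]
    [MulSemiringAction G A] (L : Type*) [Field L]
    (f₁ f₂ : A →+* L)
    (h : ∀ a : A, (∀ g : G, g • a = a) → f₁ a = f₂ a) :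
    ∃ g : G, ∀ a : A, f₂ a = f₁ (g • a) := by
  classical
  obtain ⟨fG⟩ := nonempty_fintype G
  haveI := fG
  have h' : ∀ a : A, (∀ g : G, g • a = a) → f₂ a = f₁ a := fun a ha => (h a ha).symm
  have PW1 : ∀ b : A, ∃ g : G, f₂ b = f₁ (g • b) := pointwise_aux f₁ f₂ h
  have PW2 : ∀ b : A, ∃ g : G, f₁ b = f₂ (g • b) := pointwise_aux f₂ f₁ h'
  haveI hp1 : (RingHom.ker f₁).IsPrime := RingHom.ker_isPrime f₁
  haveI hp2 : (RingHom.ker f₂).IsPrime := RingHom.ker_isPrime f₂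
  have cover1 : ((RingHom.ker f₂ : Ideal A) : Set A) ⊆
      ⋃ g ∈ ((Finset.univ : Finset G) : Set G),
        (((RingHom.ker f₁).comap (MulSemiringAction.toRingHom G A g) : Ideal A) : Set A) := by
    intro x hx
    obtain ⟨g, hg⟩ := PW1 x
    refine Set.mem_iUnion₂.mpr ⟨g, by simp, ?_⟩
    have hx0 : f₂ x = 0 := hx
    have : f₁ (g • x) = 0 := by rw [← hg]; exact hx0
    exact Ideal.mem_comap.mpr this
  have cover2 : ((RingHom.ker f₁ : Ideal A) : Set A) ⊆
      ⋃ g ∈ ((Finset.univ : Finset G) : Set G),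
        (((RingHom.ker f₂).comap (MulSemiringAction.toRingHom G A g) : Ideal A) : Set A) := by
    intro x hx
    obtain ⟨g, hg⟩ := PW2 x
    refine Set.mem_iUnion₂.mpr ⟨g, by simp, ?_⟩
    have hx0 : f₁ x = 0 := hx
    have : f₂ (g • x) = 0 := by rw [← hg]; exact hx0
    exact Ideal.mem_comap.mpr this
  obtain ⟨g₀, -, hg₀⟩ := (Ideal.subset_union_prime (1 : G) 1
    (fun g _ _ _ => Ideal.IsPrime.comap _)).mp cover1
  obtain ⟨g₁, -, hg₁⟩ := (Ideal.subset_union_prime (1 : G) 1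
    (fun g _ _ _ => Ideal.IsPrime.comap _)).mp cover2
  have hcl : ∀ x ∈ RingHom.ker f₂, (g₁ * g₀) • x ∈ RingHom.ker f₂ := by
    intro x hx
    have h1 : g₀ • x ∈ RingHom.ker f₁ := Ideal.mem_comap.mp (hg₀ hx)
    have h2 : g₁ • (g₀ • x) ∈ RingHom.ker f₂ := Ideal.mem_comap.mp (hg₁ h1)
    rwa [← mul_smul] at h2
  have hPQ : (RingHom.ker f₁).comap (MulSemiringAction.toRingHom G A g₀) = RingHom.ker f₂ := by
    refine le_antisymm ?_ hg₀
    intro x hx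
    have h2 : (g₁ * g₀) • x ∈ RingHom.ker f₂ := by
      rw [mul_smul]
      exact Ideal.mem_comap.mp (hg₁ (Ideal.mem_comap.mp hx))
    exact mem_of_smul_mem (g₁ * g₀) _ hcl x h2
  have hker1 : RingHom.ker (f₁.comp (MulSemiringAction.toRingHom G A g₀)) = RingHom.ker f₂ := by
    rw [← RingHom.comap_ker]
    exact hPQ
  have h'' : ∀ a : A, (∀ g : G, g • a = a) →
      (f₁.comp (MulSemiringAction.toRingHom G A g₀)) a = f₂ a := by
    intro a ha
    show f₁ (g₀ • a) = f₂ a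
    rw [ha g₀]
    exact h a ha
  obtain ⟨g, hg⟩ := main_aux (f₁.comp (MulSemiringAction.toRingHom G A g₀)) f₂ h''
    (RingHom.ker f₂) hker1 rfl
  refine ⟨g₀ * g, fun a => ?_⟩
  rw [mul_smul]
  exact hg a
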